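/- In ZF: if the Ehrenfeucht theory T₁ (dense linear order without endpoints with an increasing ω-sequence of constants) has a model with universe X, then T₁ has at least three pairwise non-isomorphic models with universe X. -/

import Mathlib

open FirstOrder Language

/-- The vocabulary of the Ehrenfeucht example: the order symbol together with
constants `c_n` for `n < ω`. -/
abbrev EL : FirstOrder.Language := Language.order[[ℕ]]

instance : IsOrdered EL := ⟨Sum.inl leSymb⟩

/-- The constant `c_n`, as a closed term. -/
def cT (n : ℕ) : EL.Term (Empty ⊕ Fin 0) := Constants.term (Language.order.con n)

/-- The Ehrenfeucht theory `T₁`: dense linear order without endpoints together with the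
axioms `c_n < c_{n+1}` for all `n < ω`. -/
def T1 : EL.Theory :=
  (LHom.sumInl.onTheory Language.order.dlo) ∪
    Set.range (fun n : ℕ => (Term.lt (cT n) (cT (n + 1)) : EL.Sentence))

section
variable {X : Type*}

/-- The interpretation of `≤` in a structure `S` on `X`. -/
def Ele (S : EL.Structure X) (a b : X) : Prop :=
  @Structure.RelMap EL X S 2 (Sum.inl leSymb) ![a, b]

/-- The interpretation of `<` in a structure `S` on `X`. -/
def Elt (S : EL.Structure X) (a b : X) : Prop := Ele S a b ∧ a ≠ b

/-- The interpretation of the constant `c_n` in a structure `S` on `X`. -/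
def Econ (S : EL.Structure X) (n : ℕ) : X :=
  @Structure.funMap EL X S 0 (Language.order.con n) ![]

/-- `a` realizes the type `p(x) = {c_n < x : n < ω}` in the structure `S`. -/
def RealizesP (S : EL.Structure X) (a : X) : Prop := ∀ n : ℕ, Elt S (Econ S n) a

end

/-! ### Auxiliary lemmas: transfer along isomorphisms -/

section Transfer

variable {M N : Type*} [SM : EL.Structure M] [SN : EL.Structure N]

lemma econ_map (f : M ≃[EL] N) (n : ℕ) : f (Econ SM n) = Econ SN n := by
  have h := Language.Equiv.map_fun f (Language.order.con n) (![] : Fin 0 → M)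
  have e0 : (⇑f ∘ (![] : Fin 0 → M)) = (![] : Fin 0 → N) := Subsingleton.elim _ _
  rw [e0] at h
  exact h

lemma ele_map (f : M ≃[EL] N) (a b : M) : Ele SN (f a) (f b) ↔ Ele SM a b := by
  have h := Language.Equiv.map_rel f (Sum.inl leSymb : EL.Relations 2) ![a, b]
  have e2 : (⇑f ∘ ![a, b]) = ![f a, f b] := by
    funext i; fin_cases i <;> rfl
  rw [e2] at h
  exact h

lemma elt_map (f : M ≃[EL] N) (a b : M) : Elt SN (f a) (f b) ↔ Elt SM a b := by
  unfold Elt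
  rw [ele_map f a b]
  constructor
  · rintro ⟨h1, h2⟩
    exact ⟨h1, fun hab => h2 (by rw [hab])⟩
  · rintro ⟨h1, h2⟩
    exact ⟨h1, fun hab => h2 (f.injective hab)⟩

lemma realizesP_map (f : M ≃[EL] N) (a : M) : RealizesP SN (f a) ↔ RealizesP SM a := by
  unfold RealizesP
  constructor <;> intro h n
  · have := h n
    rw [← econ_map f n] at this
    exact (elt_map f _ _).1 this
  · have := h n
    rw [← econ_map f n]
    exact (elt_map f _ _).2 this

lemma preal_map (f : M ≃[EL] N) : (∃ a, RealizesP SM a) → ∃ b, RealizesP SN b := by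
  rintro ⟨a, ha⟩
  exact ⟨f a, (realizesP_map f a).2 ha⟩

lemma hasLeast_map (f : M ≃[EL] N) :
    (∃ a, RealizesP SM a ∧ ∀ b, RealizesP SM b → Ele SM a b) →
    ∃ a, RealizesP SN a ∧ ∀ b, RealizesP SN b → Ele SN a b := by
  rintro ⟨a, ha, hmin⟩
  refine ⟨f a, (realizesP_map f a).2 ha, fun b hb => ?_⟩
  obtain ⟨b', rfl⟩ := f.surjective b
  rw [ele_map f]
  exact hmin b' ((realizesP_map f b').1 hb)

lemma model_map (f : M ≃[EL] N) (hM : @Theory.Model EL M SM T1) :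
    @Theory.Model EL N SN T1 := by
  haveI := hM
  exact StrongHomClass.theory_model f

end Transfer

/-! ### Construction of structures on a linear order -/

section Constr

variable {W : Type*} [LinearOrder W]

/-- The `EL`-structure on a linear order `W` determined by a choice of constants. -/
def mkS (c : ℕ → W) : EL.Structure W :=
  letI := orderStructure W
  letI := constantsOn.structure c
  inferInstanceAs ((Language.order.sum (constantsOn ℕ)).Structure W)

lemma mkS_ele (c : ℕ → W) (a b : W) : Ele (mkS c) a b ↔ a ≤ b := Iff.rfl

lemma mkS_econ (c : ℕ → W) (n : ℕ) : Econ (mkS c) n = c n := rfl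

lemma mkS_elt (c : ℕ → W) (a b : W) : Elt (mkS c) a b ↔ a < b := by
  rw [Elt, mkS_ele]
  exact lt_iff_le_and_ne.symm

lemma mkS_realizes (c : ℕ → W) (a : W) : RealizesP (mkS c) a ↔ ∀ n, c n < a := by
  unfold RealizesP
  simp only [mkS_elt, mkS_econ]

lemma mkS_model (c : ℕ → W) (hc : StrictMono c)
    [DenselyOrdered W] [NoMinOrder W] [NoMaxOrder W] :
    @Theory.Model EL W (mkS c) T1 := by
  letI := orderStructure W
  letI := constantsOn.structure c
  haveI hord : Language.order.OrderedStructure W := ⟨fun _ => Iff.rfl⟩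
  show W ⊨ T1
  rw [T1]; refine Theory.model_union_iff.2 ?_
  constructor
  · exact (@LHom.onTheory_model _ _ W _ _ LHom.sumInl (LHom.sumInl_isExpansionOn W) _).2 inferInstance
  · rw [Theory.model_iff]
    rintro φ ⟨n, rfl⟩
    haveI : EL.OrderedStructure W := ⟨fun _ => Iff.rfl⟩
    have : ((cT n).lt (cT (n + 1))).Realize (default : Empty → W) (default : Fin 0 → W) := by
      rw [Term.realize_lt]
      simp only [cT, Term.realize_constants]
      exact hc (Nat.lt_succ_self n)
    exact this

end Constr

/-! ### Density of a lexicographic product with `ℚ` -/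

lemma lex_denselyOrdered {α : Type*} [LinearOrder α] : DenselyOrdered (α ×ₗ ℚ) := by
  constructor
  intro a b hab
  rcases Prod.Lex.lt_iff.1 hab with h | ⟨h1, h2⟩
  · exact ⟨toLex ((ofLex a).1, (ofLex a).2 + 1),
      Prod.Lex.lt_iff.2 (Or.inr ⟨rfl, lt_add_one _⟩),
      Prod.Lex.lt_iff.2 (Or.inl h)⟩
  · obtain ⟨m, hm1, hm2⟩ := exists_between h2
    exact ⟨toLex ((ofLex a).1, m),
      Prod.Lex.lt_iff.2 (Or.inr ⟨rfl, hm1⟩),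
      Prod.Lex.lt_iff.2 (Or.inr ⟨h1, hm2⟩)⟩

/-! ### Any model of `T1` is infinite -/

lemma infinite_of_model {X : Type*} (S : EL.Structure X) (hT : @Theory.Model EL X S T1) :
    Infinite X := by
  classical
  letI := S
  have hTd : @Theory.Model EL X S (LHom.sumInl.onTheory Language.order.dlo) :=
    hT.mono Set.subset_union_left
  haveI := hT
  have hTc : ∀ n : ℕ, X ⊨ (Term.lt (cT n) (cT (n + 1)) : EL.Sentence) := fun n =>
    T1.realize_sentence_of_mem (Set.mem_union_right _ (Set.mem_range_self n))
  letI : (Language.order.sum (constantsOn ℕ)).Structure X := S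
  letI ordS : Language.order.Structure X :=
    (LHom.sumInl : Language.order →ᴸ EL).reduct X
  haveI hexp : (LHom.sumInl : Language.order →ᴸ EL).IsExpansionOn X :=
    LHom.isExpansionOn_reduct _ _
  haveI hdlo : X ⊨ Language.order.dlo := (LHom.sumInl.onTheory_model _).1 hTd
  haveI : X ⊨ Language.order.linearOrderTheory := inferInstance
  letI lo : LinearOrder X := Language.order.linearOrderOfModels X
  haveI : EL.OrderedStructure X := ⟨fun x => by
    have hx : x = ![x 0, x 1] := by funext i; fin_cases i <;> rfl
    conv_lhs => rw [hx]
    exact Iff.rfl⟩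
  have hreal : ∀ n : ℕ, Econ S n < Econ S (n + 1) := by
    intro n
    have hmem := hTc n
    rw [Sentence.Realize, Formula.Realize, Term.realize_lt] at hmem
    simp only [cT, Term.realize_constants] at hmem
    have hdef : ∀ m : ℕ, ((Language.order.con m : EL.Constants) : X) = Econ S m := fun m =>
      congrArg (Structure.funMap _) (Subsingleton.elim _ _)
    rw [hdef, hdef] at hmem
    exact hmem
  exact Infinite.of_injective (fun n => Econ S n) (strictMono_nat_of_lt_succ hreal).injective

/-! ### Main theorem -/

/-- (ZF) If the Ehrenfeucht theory `T₁` has a model with universe `X`, then it has at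
least three pairwise non-isomorphic models with universe `X`. -/
theorem three_nonisomorphic_models (X : Type*)
    (h : ∃ S : EL.Structure X, @Theory.Model EL X S T1) :
    ∃ S₁ S₂ S₃ : EL.Structure X,
      @Theory.Model EL X S₁ T1 ∧ @Theory.Model EL X S₂ T1 ∧ @Theory.Model EL X S₃ T1 ∧
      ¬ Nonempty (@Language.Equiv EL X X S₁ S₂) ∧
      ¬ Nonempty (@Language.Equiv EL X X S₁ S₃) ∧
      ¬ Nonempty (@Language.Equiv EL X X S₂ S₃) := by
  classical
  obtain ⟨S₀, hS₀⟩ := h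
  haveI : Infinite X := infinite_of_model S₀ hS₀
  -- a linear order on `X` with a top element
  haveI : DecidableRel (WellOrderingRel (α := X)) := fun a b => Classical.dec _
  let lo0 : LinearOrder X := linearOrderOfSTO WellOrderingRel
  letI lo : LinearOrder X := @OrderDual.instLinearOrder X lo0
  have wf : WellFounded (WellOrderingRel (α := X)) :=
    (WellOrderingRel.isWellOrder (α := X)).toIsWellFounded.wf
  let x₀ : X := wf.min Set.univ Set.univ_nonempty
  have htop : ∀ x : X, x ≤ x₀ := by
    intro x
    have hnl : ¬ lo0.lt x x₀ := wf.not_lt_min Set.univ (Set.mem_univ x)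
    exact @le_of_not_gt X lo0 _ _ hnl
  obtain ⟨x₁, hx₁ne⟩ := exists_ne x₀
  have hx₁ : x₁ < x₀ := lt_of_le_of_ne (htop x₁) hx₁ne
  -- the lexicographic product and its order properties
  haveI : DenselyOrdered (X ×ₗ ℚ) := lex_denselyOrdered
  -- a bijection between `X ×ₗ ℚ` and `X`
  have hcard : Nonempty ((X ×ₗ ℚ) ≃ X) := by
    apply Cardinal.eq.1
    have h1 : Cardinal.mk (X ×ₗ ℚ) = Cardinal.mk (X × ℚ) := rfl
    rw [h1, Cardinal.mk_prod, Cardinal.lift_uzero, Cardinal.mk_denumerable ℚ,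
      Cardinal.lift_aleph0]
    exact Cardinal.mul_eq_left (Cardinal.aleph0_le_mk X) (Cardinal.aleph0_le_mk X)
      Cardinal.aleph0_ne_zero
  obtain ⟨e⟩ := hcard
  -- the three sequences of constants
  let c1 : ℕ → X ×ₗ ℚ := fun n => toLex (x₀, (n : ℚ))
  let c2 : ℕ → X ×ₗ ℚ := fun n => toLex (x₁, (n : ℚ))
  let c3 : ℕ → X ×ₗ ℚ := fun n => toLex (x₀, -(1 / (n + 1) : ℚ))
  have hmono : ∀ (x : X) (q : ℕ → ℚ), StrictMono q → StrictMono (fun n => toLex (x, q n)) := by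
    intro x q hq m n hmn
    exact Prod.Lex.lt_iff.2 (Or.inr ⟨rfl, hq hmn⟩)
  have hc1 : StrictMono c1 := hmono x₀ _ (fun m n hmn => by exact_mod_cast hmn)
  have hc2 : StrictMono c2 := hmono x₁ _ (fun m n hmn => by exact_mod_cast hmn)
  have hc3 : StrictMono c3 := by
    apply hmono x₀
    intro m n hmn
    have h1 : (0 : ℚ) < m + 1 := by positivity
    have h2 : (m : ℚ) + 1 < n + 1 := by exact_mod_cast Nat.add_lt_add_right hmn 1
    have := one_div_lt_one_div_of_lt h1 h2
    linarith
  -- properties of the three structures on `X ×ₗ ℚ`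
  -- (1) `c1` : the type `p` is omitted
  have homit : ∀ a : X ×ₗ ℚ, ¬ RealizesP (mkS c1) a := by
    intro a ha
    rw [mkS_realizes] at ha
    have hfst : (ofLex a).1 = x₀ := by
      have := Prod.Lex.lt_iff.1 (ha 0)
      rcases this with h | ⟨h, _⟩
      · exact absurd (htop (ofLex a).1) (not_le_of_gt h)
      · exact h.symm
    obtain ⟨n, hn⟩ := exists_nat_gt ((ofLex a).2)
    have := Prod.Lex.lt_iff.1 (ha n)
    rcases this with h | ⟨_, h2⟩
    · exact absurd (htop (ofLex a).1) (not_le_of_gt h)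
    · change (n : ℚ) < (ofLex a).2 at h2
      exact absurd hn (not_lt_of_gt h2)
  -- (2) `c2` : realized, but with no least realization
  have hreal2 : ∃ a : X ×ₗ ℚ, RealizesP (mkS c2) a := by
    refine ⟨toLex (x₀, 0), ?_⟩
    rw [mkS_realizes]
    intro n
    exact Prod.Lex.lt_iff.2 (Or.inl hx₁)
  have hrealizer2 : ∀ a : X ×ₗ ℚ, RealizesP (mkS c2) a → x₁ < (ofLex a).1 := by
    intro a ha
    rw [mkS_realizes] at ha
    by_contra hcon
    obtain ⟨n, hn⟩ := exists_nat_gt ((ofLex a).2)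
    rcases Prod.Lex.lt_iff.1 (ha n) with h | ⟨_, h2⟩
    · exact hcon h
    · change (n : ℚ) < (ofLex a).2 at h2
      exact absurd hn (not_lt_of_gt h2)
  have hnoleast2 : ¬ ∃ a, RealizesP (mkS c2) a ∧
      ∀ b, RealizesP (mkS c2) b → Ele (mkS c2) a b := by
    rintro ⟨a, ha, hmin⟩
    have h1 : x₁ < (ofLex a).1 := hrealizer2 a ha
    have hb : RealizesP (mkS c2) (toLex ((ofLex a).1, (ofLex a).2 - 1)) := by
      rw [mkS_realizes]
      intro n
      exact Prod.Lex.lt_iff.2 (Or.inl h1)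
    have := hmin _ hb
    rw [mkS_ele] at this
    rcases Prod.Lex.le_iff.1 this with h | ⟨_, h2⟩
    · exact absurd h (lt_irrefl _)
    · have h2' : (ofLex a).2 ≤ (ofLex a).2 - 1 := h2
      linarith
  -- (3) `c3` : realized with a least realization
  have hleast3 : ∃ a, RealizesP (mkS c3) a ∧
      ∀ b, RealizesP (mkS c3) b → Ele (mkS c3) a b := by
    refine ⟨toLex (x₀, 0), ?_, ?_⟩
    · rw [mkS_realizes]
      intro n
      refine Prod.Lex.lt_iff.2 (Or.inr ⟨rfl, ?_⟩)
      show -(1 / ((n : ℚ) + 1)) < 0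
      rw [neg_lt, neg_zero]
      positivity
    · intro b hb
      rw [mkS_realizes] at hb
      rw [mkS_ele]
      have hfst : (ofLex b).1 = x₀ := by
        rcases Prod.Lex.lt_iff.1 (hb 0) with h | ⟨h, _⟩
        · exact absurd (htop (ofLex b).1) (not_le_of_gt h)
        · exact h.symm
      have hsnd : (0 : ℚ) ≤ (ofLex b).2 := by
        by_contra hcon
        push_neg at hcon
        obtain ⟨n, hn⟩ := exists_nat_gt (1 / (-(ofLex b).2))
        rcases Prod.Lex.lt_iff.1 (hb n) with h | ⟨_, h2⟩
        · exact absurd (htop (ofLex b).1) (not_le_of_gt h)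
        · have h2' : -(1 / ((n : ℚ) + 1)) < (ofLex b).2 := h2
          have hpos : (0 : ℚ) < -(ofLex b).2 := by linarith
          have h3 : 1 / (-(ofLex b).2) < n + 1 := by linarith
          have h4 : 1 / ((n : ℚ) + 1) < -(ofLex b).2 := by
            rw [div_lt_iff₀ (by positivity)]
            rw [div_lt_iff₀ hpos] at h3
            linarith [mul_comm (-(ofLex b).2) ((n : ℚ) + 1)]
          linarith
      exact Prod.Lex.le_iff.2 (Or.inr ⟨hfst.symm, hsnd⟩)
  have hreal3 : ∃ a : X ×ₗ ℚ, RealizesP (mkS c3) a := ⟨hleast3.choose, hleast3.choose_spec.1⟩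
  -- transport the structures to `X`
  let SY1 := mkS c1
  let SY2 := mkS c2
  let SY3 := mkS c3
  let S₁ : EL.Structure X := @Equiv.inducedStructure EL (X ×ₗ ℚ) X SY1 e
  let S₂ : EL.Structure X := @Equiv.inducedStructure EL (X ×ₗ ℚ) X SY2 e
  let S₃ : EL.Structure X := @Equiv.inducedStructure EL (X ×ₗ ℚ) X SY3 e
  let g₁ : @Language.Equiv EL (X ×ₗ ℚ) X SY1 S₁ := @Equiv.inducedStructureEquiv EL (X ×ₗ ℚ) X SY1 e
  let g₂ : @Language.Equiv EL (X ×ₗ ℚ) X SY2 S₂ := @Equiv.inducedStructureEquiv EL (X ×ₗ ℚ) X SY2 e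
  let g₃ : @Language.Equiv EL (X ×ₗ ℚ) X SY3 S₃ := @Equiv.inducedStructureEquiv EL (X ×ₗ ℚ) X SY3 e
  refine ⟨S₁, S₂, S₃, ?_, ?_, ?_, ?_, ?_, ?_⟩
  · exact @model_map _ _ SY1 S₁ g₁ (mkS_model c1 hc1)
  · exact @model_map _ _ SY2 S₂ g₂ (mkS_model c2 hc2)
  · exact @model_map _ _ SY3 S₃ g₃ (mkS_model c3 hc3)
  · rintro ⟨f⟩
    -- S₂ realizes p, so S₁ would realize p, contradicting omission
    have h2 : ∃ a, RealizesP S₂ a := @preal_map _ _ SY2 S₂ g₂ hreal2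
    have h1 : ∃ a, RealizesP S₁ a := @preal_map _ _ S₂ S₁ (@Language.Equiv.symm EL X X S₁ S₂ f) h2
    obtain ⟨a, ha⟩ := h1
    have := @preal_map _ _ S₁ SY1 (@Language.Equiv.symm EL _ X SY1 S₁ g₁) ⟨a, ha⟩
    obtain ⟨b, hb⟩ := this
    exact homit b hb
  · rintro ⟨f⟩
    have h3 : ∃ a, RealizesP S₃ a := @preal_map _ _ SY3 S₃ g₃ hreal3
    have h1 : ∃ a, RealizesP S₁ a := @preal_map _ _ S₃ S₁ (@Language.Equiv.symm EL X X S₁ S₃ f) h3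
    have := @preal_map _ _ S₁ SY1 (@Language.Equiv.symm EL _ X SY1 S₁ g₁) h1
    obtain ⟨b, hb⟩ := this
    exact homit b hb
  · rintro ⟨f⟩
    have h3 : ∃ a, RealizesP S₃ a ∧ ∀ b, RealizesP S₃ b → Ele S₃ a b :=
      @hasLeast_map _ _ SY3 S₃ g₃ hleast3
    have h2 : ∃ a, RealizesP S₂ a ∧ ∀ b, RealizesP S₂ b → Ele S₂ a b :=
      @hasLeast_map _ _ S₃ S₂ (@Language.Equiv.symm EL X X S₂ S₃ f) h3
    have := @hasLeast_map _ _ S₂ SY2 (@Language.Equiv.symm EL _ X SY2 S₂ g₂) h2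
    exact hnoleast2 this
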